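/- Let k ∈ ℕ and let U be a unitary operator on H of class C^k(A). Then for every m ∈ ℤ, U^m ∈ C^k(A). Moreover, setting C = ‖U‖_{C^k} := ( Σ_{j=0}^k ‖ad_A^j U‖^2 )^{1/2}, for all j ∈ {1,…,k} and all m ∈ ℤ with |m| ≥ j one has ‖ad_A^j(U^m)‖ ≤ C^j |m|^j. -/

import Mathlib

variable {H : Type} [NormedAddCommGroup H] [InnerProductSpace ℂ H] [CompleteSpace H]

local notation "⟪" x ", " y "⟫" => @inner ℂ _ _ x y

/-- `C` is the bounded operator representing the commutator form
`F(φ,ψ) = ⟨Aφ, Bψ⟩ − ⟨φ, BAψ⟩` on `D(A) × D(A)`. -/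
def IsCommutatorOf (A : H →ₗ.[ℂ] H) (B C : H →L[ℂ] H) : Prop :=
  ∀ x y : A.domain,
    (inner ℂ (A x) (B (y : H)) : ℂ) - inner ℂ (x : H) (B (A y)) = inner ℂ (x : H) (C (y : H))

section aux

variable {A : H →ₗ.[ℂ] H}

/-- symmetry of a self-adjoint `LinearPMap` -/
lemma sa_symm (hA : IsSelfAdjoint A) (x y : A.domain) : ⟪A x, (y : H)⟫ = ⟪(x : H), A y⟫ := by
  have hdense : Dense (A.domain : Set H) := hA.dense_domain
  have hA' : A.adjoint = A := hA
  obtain ⟨hdom, hfun⟩ := LinearPMap.ext_iff.mp hA'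
  have hy : (y : H) ∈ A.adjoint.domain := by rw [hdom]; exact y.2
  have h1 := LinearPMap.adjoint_isFormalAdjoint hdense ⟨(y : H), hy⟩ x
  have h2 : A.adjoint ⟨(y : H), hy⟩ = A y := @hfun (y : H) hy y.2
  rw [h2] at h1
  rw [← inner_conj_symm, ← inner_conj_symm ((x : H)) (A y), h1]

/-- a self-adjoint operator maps: if `⟪A x, v⟫ = ⟪x, w⟫` for all `x ∈ D(A)` then `v ∈ D(A)`
and `A v = w`. -/
lemma sa_mapsTo (hA : IsSelfAdjoint A) {v w : H}
    (h : ∀ x : A.domain, ⟪A x, v⟫ = ⟪(x : H), w⟫) :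
    ∃ hv : v ∈ A.domain, A ⟨v, hv⟩ = w := by
  have hdense : Dense (A.domain : Set H) := hA.dense_domain
  have hA' : A.adjoint = A := hA
  obtain ⟨hdom, hfun⟩ := LinearPMap.ext_iff.mp hA'
  have hv' : v ∈ A.adjoint.domain := by
    apply LinearPMap.mem_adjoint_domain_of_exists
    exact ⟨w, fun x => by rw [← inner_conj_symm, ← h x, inner_conj_symm]⟩
  have hval : A.adjoint ⟨v, hv'⟩ = w := by
    apply LinearPMap.adjoint_apply_eq hdense
    intro x
    rw [← inner_conj_symm, ← h x, inner_conj_symm]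
  have hv : v ∈ A.domain := by rw [← hdom]; exact hv'
  refine ⟨hv, ?_⟩
  have h3 := @hfun v hv' hv
  rw [← h3, hval]


lemma comm_apply {B C : H →L[ℂ] H} (h : IsCommutatorOf A B C) (x y : A.domain) :
    ⟪A x, B (y : H)⟫ = ⟪(x : H), B (A y) + C (y : H)⟫ := by
  rw [inner_add_right, ← h x y]; ring

lemma comm_mapsTo (hA : IsSelfAdjoint A) {B C : H →L[ℂ] H} (h : IsCommutatorOf A B C)
    (y : A.domain) : ∃ hv : B (y : H) ∈ A.domain, A ⟨B (y : H), hv⟩ = B (A y) + C (y : H) :=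
  sa_mapsTo hA (fun x => comm_apply h x y)

lemma comm_one (hA : IsSelfAdjoint A) : IsCommutatorOf A 1 0 := by
  intro x y
  simp only [ContinuousLinearMap.one_apply, ContinuousLinearMap.zero_apply, inner_zero_right]
  rw [sa_symm hA x y, sub_self]

lemma comm_zero : IsCommutatorOf A 0 0 := by
  intro x y
  simp

lemma comm_add {B C B' C' : H →L[ℂ] H} (h : IsCommutatorOf A B C)
    (h' : IsCommutatorOf A B' C') : IsCommutatorOf A (B + B') (C + C') := by
  intro x y
  simp only [ContinuousLinearMap.add_apply, inner_add_right, map_add]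
  linear_combination h x y + h' x y

lemma comm_smul (c : ℂ) {B C : H →L[ℂ] H} (h : IsCommutatorOf A B C) :
    IsCommutatorOf A (c • B) (c • C) := by
  intro x y
  simp only [ContinuousLinearMap.smul_apply, inner_smul_right, map_smul]
  linear_combination c * h x y

lemma comm_mul (hA : IsSelfAdjoint A) {B₁ C₁ B₂ C₂ : H →L[ℂ] H}
    (h₁ : IsCommutatorOf A B₁ C₁) (h₂ : IsCommutatorOf A B₂ C₂) :
    IsCommutatorOf A (B₁ * B₂) (C₁ * B₂ + B₁ * C₂) := by
  intro x y
  obtain ⟨hv, hAv⟩ := comm_mapsTo hA h₂ y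
  have h1 := h₁ x ⟨B₂ (y : H), hv⟩
  simp only [ContinuousLinearMap.mul_apply, ContinuousLinearMap.add_apply] at *
  rw [hAv] at h1
  simp only [map_add, inner_add_right] at h1 ⊢
  linear_combination h1

lemma comm_star {B C : H →L[ℂ] H} (h : IsCommutatorOf A B C) :
    IsCommutatorOf A (star B) (-(star C)) := by
  intro x y
  have hc := h y x
  rw [ContinuousLinearMap.star_eq_adjoint]
  rw [ContinuousLinearMap.adjoint_inner_right, ContinuousLinearMap.adjoint_inner_right]
  have hthis : ⟪B (x : H), A y⟫ - ⟪B (A x), (y : H)⟫ = ⟪C (x : H), (y : H)⟫ := by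
    have := congrArg (starRingEnd ℂ) hc
    simpa [map_sub, inner_conj_symm] using this
  rw [ContinuousLinearMap.neg_apply, inner_neg_right, ContinuousLinearMap.star_eq_adjoint,
    ContinuousLinearMap.adjoint_inner_right]
  linear_combination -hthis

lemma comm_unique (hA : IsSelfAdjoint A) {B C C' : H →L[ℂ] H} (h : IsCommutatorOf A B C)
    (h' : IsCommutatorOf A B C') : C = C' := by
  have hdense : Dense (A.domain : Set H) := hA.dense_domain
  have key : ∀ y : A.domain, C (y : H) = C' (y : H) := by
    intro y
    apply hdense.eq_of_inner_left ℂ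
    intro v hv
    obtain ⟨v, rfl⟩ : ∃ w : A.domain, (w : H) = v := ⟨⟨v, hv⟩, rfl⟩
    rw [← inner_conj_symm, ← inner_conj_symm (C' (y : H))]
    rw [← h v y, ← h' v y]
  apply ContinuousLinearMap.coeFn_injective
  refine Continuous.ext_on hdense C.continuous C'.continuous ?_
  intro v hv
  exact key ⟨v, hv⟩

end aux


/-- `D` is a chain of iterated commutators for `B` of length `k`:  `D 0 = B` and
`D (j+1) = ad_A (D j)` for `j < k`; its existence means `B ∈ C^k(A)` and `ad_A^j B = D j`. -/
def IsAdChain (A : H →ₗ.[ℂ] H) (B : H →L[ℂ] H) (D : ℕ → H →L[ℂ] H) (k : ℕ) : Prop :=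
  D 0 = B ∧ ∀ j < k, IsCommutatorOf A (D j) (D (j + 1))

/-- `B` is of class `C^k(A)`. -/
def MemCk (A : H →ₗ.[ℂ] H) (B : H →L[ℂ] H) (k : ℕ) : Prop := ∃ D, IsAdChain A B D k

section chains

variable {A : H →ₗ.[ℂ] H} {k : ℕ}

lemma comm_sum {ι : Type*} {s : Finset ι} {B C : ι → H →L[ℂ] H}
    (h : ∀ i ∈ s, IsCommutatorOf A (B i) (C i)) :
    IsCommutatorOf A (∑ i ∈ s, B i) (∑ i ∈ s, C i) := by
  classical
  induction s using Finset.induction with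
  | empty => simpa using (comm_zero (A := A))
  | insert a s hx ih =>
    rw [Finset.sum_insert hx, Finset.sum_insert hx]
    exact comm_add (h _ (Finset.mem_insert_self _ _))
      (ih fun i hi => h i (Finset.mem_insert_of_mem hi))

/-- the Leibniz chain for a product -/
noncomputable def leib (D₁ D₂ : ℕ → H →L[ℂ] H) (j : ℕ) : H →L[ℂ] H :=
  ∑ i ∈ Finset.range (j + 1), ((j.choose i : ℂ)) • (D₁ i * D₂ (j - i))

lemma leib_succ (D₁ D₂ : ℕ → H →L[ℂ] H) (j : ℕ) :
    leib D₁ D₂ (j + 1) =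
      ∑ i ∈ Finset.range (j + 1),
        (j.choose i : ℂ) • (D₁ (i + 1) * D₂ (j - i) + D₁ i * D₂ (j - i + 1)) := by
  have e1 : ∀ i ∈ Finset.range (j + 1),
      (((j + 1).choose (i + 1) : ℂ)) • (D₁ (i + 1) * D₂ (j + 1 - (i + 1))) =
        (j.choose i : ℂ) • (D₁ (i + 1) * D₂ (j - i))
          + (j.choose (i + 1) : ℂ) • (D₁ (i + 1) * D₂ (j - i)) := by
    intro i hi
    rw [Nat.succ_sub_succ, Nat.choose_succ_succ, Nat.cast_add, add_smul]
  calc leib D₁ D₂ (j + 1)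
      = (∑ i ∈ Finset.range (j + 1),
          (((j + 1).choose (i + 1) : ℂ)) • (D₁ (i + 1) * D₂ (j + 1 - (i + 1))))
          + ((j + 1).choose 0 : ℂ) • (D₁ 0 * D₂ (j + 1 - 0)) := by
        rw [leib, Finset.sum_range_succ']
    _ = (∑ i ∈ Finset.range (j + 1), (j.choose i : ℂ) • (D₁ (i + 1) * D₂ (j - i)))
        + ((∑ i ∈ Finset.range (j + 1), (j.choose (i + 1) : ℂ) • (D₁ (i + 1) * D₂ (j + 1 - (i + 1))))
          + (j.choose 0 : ℂ) • (D₁ 0 * D₂ (j + 1 - 0))) := by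
        rw [Finset.sum_congr rfl e1, Finset.sum_add_distrib]
        have : ∀ i ∈ Finset.range (j + 1),
            (j.choose (i + 1) : ℂ) • (D₁ (i + 1) * D₂ (j - i)) =
              (j.choose (i + 1) : ℂ) • (D₁ (i + 1) * D₂ (j + 1 - (i + 1))) := by
          intro i hi; rw [Nat.succ_sub_succ]
        rw [Finset.sum_congr rfl this]
        simp [add_assoc]
    _ = (∑ i ∈ Finset.range (j + 1), (j.choose i : ℂ) • (D₁ (i + 1) * D₂ (j - i)))
        + ∑ i ∈ Finset.range (j + 2), (j.choose i : ℂ) • (D₁ i * D₂ (j + 1 - i)) := by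
        rw [Finset.sum_range_succ' (fun i => (j.choose i : ℂ) • (D₁ i * D₂ (j + 1 - i))) (j + 1)]
    _ = (∑ i ∈ Finset.range (j + 1), (j.choose i : ℂ) • (D₁ (i + 1) * D₂ (j - i)))
        + ∑ i ∈ Finset.range (j + 1), (j.choose i : ℂ) • (D₁ i * D₂ (j - i + 1)) := by
        congr 1
        rw [Finset.sum_range_succ]
        simp only [Nat.choose_succ_self, Nat.cast_zero, zero_smul, add_zero]
        apply Finset.sum_congr rfl
        intro i hi
        rw [Nat.succ_sub (Nat.lt_succ_iff.mp (Finset.mem_range.mp hi))]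
    _ = ∑ i ∈ Finset.range (j + 1),
          (j.choose i : ℂ) • (D₁ (i + 1) * D₂ (j - i) + D₁ i * D₂ (j - i + 1)) := by
        rw [← Finset.sum_add_distrib]
        apply Finset.sum_congr rfl
        intro i hi
        rw [smul_add]

lemma chain_mul (hA : IsSelfAdjoint A) {B₁ B₂ : H →L[ℂ] H} {D₁ D₂ : ℕ → H →L[ℂ] H}
    (h₁ : IsAdChain A B₁ D₁ k) (h₂ : IsAdChain A B₂ D₂ k) :
    IsAdChain A (B₁ * B₂) (leib D₁ D₂) k := by
  constructor
  · simp [leib, h₁.1, h₂.1]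
  · intro j hj
    rw [leib_succ]
    unfold leib
    apply comm_sum
    intro i hi
    have hij : i ≤ j := Nat.lt_succ_iff.mp (Finset.mem_range.mp hi)
    have hik : i < k := lt_of_le_of_lt hij hj
    have hjik : j - i < k := lt_of_le_of_lt (Nat.sub_le j i) hj
    exact comm_smul _ (comm_mul hA (h₁.2 i hik) (h₂.2 (j - i) hjik))

end chains

section powers

variable {A : H →ₗ.[ℂ] H} {k : ℕ}

/-- canonical chain for `B ^ m` -/
noncomputable def powChain (D : ℕ → H →L[ℂ] H) : ℕ → ℕ → H →L[ℂ] H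
  | 0 => fun j => if j = 0 then 1 else 0
  | m + 1 => leib D (powChain D m)

lemma chain_one (hA : IsSelfAdjoint A) :
    IsAdChain A (1 : H →L[ℂ] H) (fun j => if j = 0 then 1 else 0) k := by
  refine ⟨rfl, fun j _ => ?_⟩
  rcases Nat.eq_zero_or_pos j with h | h
  · subst h
    simpa using comm_one hA
  · have h1 : j ≠ 0 := Nat.pos_iff_ne_zero.mp h
    simp only [h1, if_false, Nat.succ_ne_zero]
    exact comm_zero

lemma chain_pow (hA : IsSelfAdjoint A) {B : H →L[ℂ] H} {D : ℕ → H →L[ℂ] H}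
    (hB : IsAdChain A B D k) (m : ℕ) : IsAdChain A (B ^ m) (powChain D m) k := by
  induction m with
  | zero => simpa [powChain, pow_zero] using chain_one hA
  | succ m ih =>
    have := chain_mul hA hB ih
    rw [← pow_succ'] at this
    exact this

/-- the star chain -/
noncomputable def starChain (P : ℕ → H →L[ℂ] H) (j : ℕ) : H →L[ℂ] H :=
  ((-1 : ℂ) ^ j) • star (P j)

lemma chain_star {B : H →L[ℂ] H} {P : ℕ → H →L[ℂ] H} (h : IsAdChain A B P k) :
    IsAdChain A (star B) (starChain P) k := by
  constructor
  · simp [starChain, h.1]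
  · intro j hj
    have := comm_smul ((-1 : ℂ) ^ j) (comm_star (h.2 j hj))
    have e : ((-1 : ℂ) ^ j) • (-(star (P (j + 1)))) = starChain P (j + 1) := by
      rw [starChain, pow_succ]
      simp [smul_smul]
    rw [e] at this
    exact this

lemma chain_unique (hA : IsSelfAdjoint A) {B : H →L[ℂ] H} {E E' : ℕ → H →L[ℂ] H}
    (hE : IsAdChain A B E k) (hE' : IsAdChain A B E' k) : ∀ j ≤ k, E j = E' j := by
  intro j
  induction j with
  | zero => intro _; rw [hE.1, hE'.1]
  | succ j ih =>
    intro hjk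
    have hjk' : j < k := Nat.lt_of_succ_le hjk
    have hj : E j = E' j := ih hjk'.le
    have h1 := hE.2 j hjk'
    have h2 := hE'.2 j hjk'
    rw [hj] at h1
    exact comm_unique hA h1 h2

end powers

section norms

variable {k : ℕ}

lemma norm_powChain {D : ℕ → H →L[ℂ] H} {C : ℝ} (hC1 : 1 ≤ C) (hC0 : ‖D 0‖ ≤ 1)
    (hC : ∀ i, 1 ≤ i → i ≤ k → ‖D i‖ ≤ C) : ∀ m : ℕ,
    ‖powChain D m 0‖ ≤ 1 ∧
      ∀ j, 1 ≤ j → j ≤ k → ‖powChain D m j‖ ≤ C ^ j * (m : ℝ) ^ j := by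
  have hC0' : (0 : ℝ) ≤ C := le_trans zero_le_one hC1
  intro m
  induction m with
  | zero =>
    constructor
    · simp only [powChain, if_pos rfl]
      rw [ContinuousLinearMap.one_def]
      exact ContinuousLinearMap.norm_id_le
    · intro j hj1 hjk
      show ‖(if j = 0 then (1 : H →L[ℂ] H) else 0)‖ ≤ _
      rw [if_neg (Nat.pos_iff_ne_zero.mp hj1), norm_zero]
      have : ((0 : ℕ) : ℝ) ^ j = 0 := by
        rw [Nat.cast_zero]
        exact zero_pow (Nat.pos_iff_ne_zero.mp hj1)
      rw [this, mul_zero]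
  | succ m ih =>
    constructor
    · show ‖leib D (powChain D m) 0‖ ≤ 1
      rw [leib]
      simp only [zero_add, Finset.range_one, Finset.sum_singleton, Nat.choose_self,
        Nat.cast_one, one_smul, Nat.sub_self]
      calc ‖D 0 * powChain D m 0‖ ≤ ‖D 0‖ * ‖powChain D m 0‖ := norm_mul_le _ _
        _ ≤ 1 * 1 := mul_le_mul hC0 ih.1 (norm_nonneg _) zero_le_one
        _ = 1 := one_mul 1
    · intro j hj1 hjk
      show ‖leib D (powChain D m) j‖ ≤ C ^ j * ((m + 1 : ℕ) : ℝ) ^ j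
      have hterm : ∀ i ∈ Finset.range (j + 1),
          ‖(j.choose i : ℂ) • (D i * powChain D m (j - i))‖ ≤
            (j.choose i : ℝ) * (C ^ j * (m : ℝ) ^ (j - i)) := by
        intro i hi
        have hij : i ≤ j := Nat.lt_succ_iff.mp (Finset.mem_range.mp hi)
        rw [norm_smul, Complex.norm_natCast]
        refine mul_le_mul_of_nonneg_left ?_ (Nat.cast_nonneg _)
        refine (norm_mul_le _ _).trans ?_
        rcases Nat.eq_zero_or_pos i with hi0 | hi0
        · subst hi0
          simp only [Nat.sub_zero]
          calc ‖D 0‖ * ‖powChain D m j‖ ≤ 1 * (C ^ j * (m : ℝ) ^ j) :=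
                mul_le_mul hC0 (ih.2 j hj1 hjk) (norm_nonneg _) zero_le_one
            _ = C ^ j * (m : ℝ) ^ j := one_mul _
        · have hDi : ‖D i‖ ≤ C := hC i hi0 (le_trans hij hjk)
          rcases Nat.eq_zero_or_pos (j - i) with hji0 | hji0
          · rw [hji0]
            calc ‖D i‖ * ‖powChain D m 0‖ ≤ C * 1 :=
                  mul_le_mul hDi ih.1 (norm_nonneg _) hC0'
              _ = C := mul_one C
              _ ≤ C ^ j := le_self_pow₀ hC1 (Nat.pos_iff_ne_zero.mp hj1)
              _ = C ^ j * (m : ℝ) ^ 0 := by rw [pow_zero, mul_one]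
          · have hjik : j - i ≤ k := le_trans (Nat.sub_le j i) hjk
            calc ‖D i‖ * ‖powChain D m (j - i)‖
                ≤ C * (C ^ (j - i) * (m : ℝ) ^ (j - i)) :=
                  mul_le_mul hDi (ih.2 (j - i) hji0 hjik) (norm_nonneg _) hC0'
              _ = C ^ (j - i + 1) * (m : ℝ) ^ (j - i) := by rw [pow_succ]; ring
              _ ≤ C ^ j * (m : ℝ) ^ (j - i) := by
                  refine mul_le_mul_of_nonneg_right ?_ (by positivity)
                  exact pow_le_pow_right₀ hC1 (by omega)
      calc ‖leib D (powChain D m) j‖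
          ≤ ∑ i ∈ Finset.range (j + 1), (j.choose i : ℝ) * (C ^ j * (m : ℝ) ^ (j - i)) :=
            (norm_sum_le _ _).trans (Finset.sum_le_sum hterm)
        _ = C ^ j * ∑ i ∈ Finset.range (j + 1), (1 : ℝ) ^ i * (m : ℝ) ^ (j - i) * (j.choose i) := by
            rw [Finset.mul_sum]
            exact Finset.sum_congr rfl (fun i _ => by ring)
        _ = C ^ j * ((1 + (m : ℝ)) ^ j) := by rw [← add_pow]
        _ = C ^ j * ((m + 1 : ℕ) : ℝ) ^ j := by push_cast; ring

end norms

section main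

variable {A : H →ₗ.[ℂ] H} {k : ℕ}

lemma main_pow (hA : IsSelfAdjoint A) {U : unitary (H →L[ℂ] H)} {D : ℕ → H →L[ℂ] H}
    (hD : IsAdChain A (U : H →L[ℂ] H) D k) (m : ℤ) :
    ∃ P, IsAdChain A ((U ^ m : unitary (H →L[ℂ] H)) : H →L[ℂ] H) P k ∧
      ∀ j, ‖P j‖ = ‖powChain D m.natAbs j‖ := by
  rcases Int.natAbs_eq m with h | h
  · refine ⟨powChain D m.natAbs, ?_, fun j => rfl⟩
    have hcoe : ((U ^ m : unitary (H →L[ℂ] H)) : H →L[ℂ] H) =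
        ((U : H →L[ℂ] H)) ^ m.natAbs := by
      rw [h, zpow_natCast, SubmonoidClass.coe_pow]
      have h2 : ((m.natAbs : ℤ)).natAbs = m.natAbs := by omega
      rw [h2]
    rw [hcoe]
    exact chain_pow hA hD m.natAbs
  · refine ⟨starChain (powChain D m.natAbs), ?_, fun j => ?_⟩
    · have hcoe : ((U ^ m : unitary (H →L[ℂ] H)) : H →L[ℂ] H) =
          star (((U : H →L[ℂ] H)) ^ m.natAbs) := by
        rw [h, zpow_neg, zpow_natCast, ← Unitary.star_eq_inv, Unitary.coe_star,
          SubmonoidClass.coe_pow]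
        have h2 : (-(m.natAbs : ℤ)).natAbs = m.natAbs := by omega
        rw [h2]
      rw [hcoe]
      exact chain_star (chain_pow hA hD m.natAbs)
    · rw [starChain, norm_smul, norm_pow, norm_neg, norm_one, one_pow, one_mul, norm_star]

end main

/-- If the unitary `U` is of class `C^k(A)` (with chain `D`, `ad_A^j U = D j`), then for
every `m ∈ ℤ` the power `U^m ∈ C^k(A)`, and with
`C = ‖U‖_{C^k} = (Σ_{j=0}^k ‖ad_A^j U‖²)^{1/2}`, for every chain `E` of iterated
commutators of `U^m` (so `ad_A^j (U^m) = E j`), every `j ∈ {1,…,k}` and every `m` with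
`|m| ≥ j` one has `‖ad_A^j (U^m)‖ ≤ C^j |m|^j`. -/
theorem stmt_11 (A : H →ₗ.[ℂ] H) (hA : IsSelfAdjoint A) (k : ℕ)
    (U : unitary (H →L[ℂ] H)) (D : ℕ → H →L[ℂ] H)
    (hD : IsAdChain A (U : H →L[ℂ] H) D k) :
    (∀ m : ℤ, MemCk A ((U ^ m : unitary (H →L[ℂ] H)) : H →L[ℂ] H) k) ∧
    (∀ m : ℤ, ∀ E : ℕ → H →L[ℂ] H,
      IsAdChain A ((U ^ m : unitary (H →L[ℂ] H)) : H →L[ℂ] H) E k →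
      ∀ j, 1 ≤ j → j ≤ k → (j : ℤ) ≤ |m| →
        ‖E j‖ ≤ (Real.sqrt (∑ i ∈ Finset.range (k + 1), ‖D i‖ ^ 2)) ^ j *
          (m.natAbs : ℝ) ^ j) := by
  constructor
  · intro m
    obtain ⟨P, hP, -⟩ := main_pow hA hD m
    exact ⟨P, hP⟩
  · intro m E hE j hj1 hjk hjm
    set Cn := Real.sqrt (∑ i ∈ Finset.range (k + 1), ‖D i‖ ^ 2) with hCdef
    obtain ⟨P, hP, hPnorm⟩ := main_pow hA hD m
    have hEP : E j = P j := chain_unique hA hE hP j hjk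
    rw [hEP, hPnorm j]
    by_cases hH : Subsingleton H
    · have hss : Subsingleton (H →L[ℂ] H) :=
        ⟨fun f g => ContinuousLinearMap.ext fun x => Subsingleton.elim _ _⟩
      rw [Subsingleton.elim (powChain D m.natAbs j) 0, norm_zero]
      have h1 : (0 : ℝ) ≤ Cn := Real.sqrt_nonneg _
      positivity
    · have : Nontrivial H := not_subsingleton_iff_nontrivial.mp hH
      have hU1 : ‖(U : H →L[ℂ] H)‖ = 1 := by
        have h2 := CStarRing.norm_star_mul_self (x := (U : H →L[ℂ] H))
        rw [Unitary.coe_star_mul_self] at h2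
        rw [ContinuousLinearMap.one_def, ContinuousLinearMap.norm_id] at h2
        rcases mul_self_eq_one_iff.mp h2.symm with h3 | h3
        · exact h3
        · exfalso
          have := norm_nonneg (U : H →L[ℂ] H)
          rw [h3] at this
          linarith
      have hC0 : ‖D 0‖ ≤ 1 := by rw [hD.1, hU1]
      have hCb : ∀ i, 1 ≤ i → i ≤ k → ‖D i‖ ≤ Cn := by
        intro i _ hik
        calc ‖D i‖ = Real.sqrt (‖D i‖ ^ 2) := (Real.sqrt_sq (norm_nonneg _)).symm
          _ ≤ Cn := Real.sqrt_le_sqrt (Finset.single_le_sum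
              (f := fun i => ‖D i‖ ^ 2) (fun i _ => sq_nonneg _)
              (Finset.mem_range.mpr (Nat.lt_succ_of_le hik)))
      have hCn1 : 1 ≤ Cn := by
        calc (1 : ℝ) = ‖D 0‖ := by rw [hD.1, hU1]
          _ = Real.sqrt (‖D 0‖ ^ 2) := (Real.sqrt_sq (norm_nonneg _)).symm
          _ ≤ Cn := Real.sqrt_le_sqrt (Finset.single_le_sum
              (f := fun i => ‖D i‖ ^ 2) (fun i _ => sq_nonneg _)
              (Finset.mem_range.mpr (Nat.succ_pos k)))
      exact (norm_powChain hCn1 hC0 hCb m.natAbs).2 j hj1 hjk
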